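/- Let S and A be finite nonempty sets, p : S × A × S → ℝ with p(s,a,·) a probability distribution on S for each (s,a), r : S × A → ℝ, and t : S × A → ℝ with t(s,a) > 0 for all (s,a). Let 0 < ᾱ ≤ min_{(s,a)} t(s,a), and define T : ℝ^{S×A} → ℝ^{S×A} by T(q)(s,a) = ᾱ·r(s,a)/t(s,a) + (ᾱ/t(s,a))·Σ_{s'} p(s,a,s')·max_{a'} q(s',a') + (1 − ᾱ/t(s,a))·q(s,a). Then T is nonexpansive with respect to the sup norm, i.e., ‖T(q) − T(q')‖∞ ≤ ‖q − q'‖∞ for all q, q' ∈ ℝ^{S×A}, and T(q + c) = T(q) + c for every q ∈ ℝ^{S×A} and c ∈ ℝ. -/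
import Mathlib


open Finset in
/-- Schweitzer's operator `T` on `ℝ^{S×A}` is sup-norm nonexpansive and
commutes with adding a constant to every component. -/
theorem statement4 {S A : Type} [Fintype S] [Fintype A] [Nonempty S] [Nonempty A]
    (p : S → A → S → ℝ) (hp0 : ∀ s a s', 0 ≤ p s a s')
    (hp1 : ∀ s a, ∑ s', p s a s' = 1)
    (r : S → A → ℝ) (t : S → A → ℝ) (ht : ∀ s a, 0 < t s a)
    (α : ℝ) (hα : 0 < α) (hαt : ∀ s a, α ≤ t s a)
    (T : (S × A → ℝ) → (S × A → ℝ))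
    (hT : ∀ (q : S × A → ℝ) (s : S) (a : A),
      T q (s, a) = α * r s a / t s a
        + (α / t s a) * ∑ s', p s a s' * (⨆ a' : A, q (s', a'))
        + (1 - α / t s a) * q (s, a)) :
    (∀ q q' : S × A → ℝ, ‖T q - T q'‖ ≤ ‖q - q'‖) ∧
    (∀ (q : S × A → ℝ) (c : ℝ), T (fun x => q x + c) = fun x => T q x + c) := by
  constructor
  · intro q q'
    set δ := ‖q - q'‖ with hδ
    have hδ0 : 0 ≤ δ := norm_nonneg _
    have hcomp : ∀ x : S × A, |q x - q' x| ≤ δ := by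
      intro x
      have := norm_le_pi_norm (q - q') x
      simpa [Real.norm_eq_abs] using this
    have hsup : ∀ s' : S, |(⨆ a' : A, q (s', a')) - ⨆ a' : A, q' (s', a')| ≤ δ := by
      intro s'
      rw [abs_sub_le_iff]
      constructor
      · rw [sub_le_iff_le_add]
        apply ciSup_le
        intro a'
        have h1 : q (s', a') ≤ q' (s', a') + δ := by
          have := hcomp (s', a'); rw [abs_sub_le_iff] at this; linarith [this.1]
        exact h1.trans (by
          have := le_ciSup (Set.Finite.bddAbove (Set.finite_range _)) a'
            (f := fun a' : A => q' (s', a'))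
          linarith)
      · rw [sub_le_iff_le_add]
        apply ciSup_le
        intro a'
        have h1 : q' (s', a') ≤ q (s', a') + δ := by
          have := hcomp (s', a'); rw [abs_sub_le_iff] at this; linarith [this.2]
        exact h1.trans (by
          have := le_ciSup (Set.Finite.bddAbove (Set.finite_range _)) a'
            (f := fun a' : A => q (s', a'))
          linarith)
    rw [pi_norm_le_iff_of_nonneg hδ0]
    rintro ⟨s, a⟩
    rw [Real.norm_eq_abs]
    have hts := ht s a
    have hαts : α / t s a ≤ 1 := (div_le_one hts).2 (hαt s a)
    have hαt0 : 0 < α / t s a := div_pos hα hts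
    have key : T q (s, a) - T q' (s, a)
        = (α / t s a) * ∑ s', p s a s' * ((⨆ a' : A, q (s', a')) - ⨆ a' : A, q' (s', a'))
          + (1 - α / t s a) * (q (s, a) - q' (s, a)) := by
      rw [hT, hT]
      simp [Finset.mul_sum, mul_sub]
      ring
    show |T q (s, a) - T q' (s, a)| ≤ δ
    rw [key]
    calc |(α / t s a) * ∑ s', p s a s' * ((⨆ a' : A, q (s', a')) - ⨆ a' : A, q' (s', a'))
          + (1 - α / t s a) * (q (s, a) - q' (s, a))|
        ≤ |(α / t s a) * ∑ s', p s a s' * ((⨆ a' : A, q (s', a')) - ⨆ a' : A, q' (s', a'))|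
          + |(1 - α / t s a) * (q (s, a) - q' (s, a))| := abs_add_le _ _
      _ ≤ (α / t s a) * δ + (1 - α / t s a) * δ := by
          apply add_le_add
          · rw [abs_mul, abs_of_pos hαt0]
            apply mul_le_mul_of_nonneg_left _ hαt0.le
            calc |∑ s', p s a s' * ((⨆ a' : A, q (s', a')) - ⨆ a' : A, q' (s', a'))|
                ≤ ∑ s', |p s a s' * ((⨆ a' : A, q (s', a')) - ⨆ a' : A, q' (s', a'))| :=
                  Finset.abs_sum_le_sum_abs _ _
              _ ≤ ∑ s' : S, p s a s' * δ := by
                  apply Finset.sum_le_sum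
                  intro s' _
                  rw [abs_mul, abs_of_nonneg (hp0 s a s')]
                  exact mul_le_mul_of_nonneg_left (hsup s') (hp0 s a s')
              _ = δ := by rw [← Finset.sum_mul, hp1, one_mul]
          · rw [abs_mul, abs_of_nonneg (by linarith)]
            exact mul_le_mul_of_nonneg_left (hcomp (s, a)) (by linarith)
      _ = δ := by ring
  · intro q c
    funext x
    obtain ⟨s, a⟩ := x
    rw [hT, hT]
    have hsup : ∀ s' : S, (⨆ a' : A, (q (s', a') + c)) = (⨆ a' : A, q (s', a')) + c := by
      intro s'
      exact (ciSup_add (f := fun a' : A => q (s', a'))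
        (Set.Finite.bddAbove (Set.finite_range _)) c).symm
    simp only [hsup]
    have hts := (ht s a).ne'
    field_simp
    simp only [mul_add, Finset.sum_add_distrib, ← Finset.sum_mul, hp1, one_mul]
    ring
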